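/- arXiv:hep-th/0009146 — 4 statements merged into one kernel-verified Lean document; each statement's English description precedes it below -/
import Mathlib

section
/- If f is continuous and strictly increasing on [s0, ∞) with f(s0) > 0, and g is continuous and positive, and the integral ∫_{s0}^∞ g(s)/f(s)^2 ds converges, then the separation integral L(s0) = 2 ∫_{s0}^∞ (g(s)/f(s)) · f(s0)/√(f(s)² − f(s0)²) ds converges. -/
open MeasureTheory Set Filter

/-- If `f` is continuous and strictly increasing on `[s0, ∞)` with `f s0 > 0`,
`g` is continuous and positive there, `f` is continuously differentiable with
`deriv f s0 > 0`, and `∫_{s0}^∞ g/f² < ∞`, then the separation integral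
`L(s0) = 2 ∫_{s0}^∞ (g/f) · f(s0)/√(f² − f(s0)²)` converges. -/
theorem separation_integral_converges
    (f g : ℝ → ℝ) (s0 : ℝ)
    (hf_cont : ContinuousOn f (Ici s0))
    (hf_mono : StrictMonoOn f (Ici s0))
    (hf_pos : 0 < f s0)
    (hg_cont : ContinuousOn g (Ici s0))
    (hg_pos : ∀ s ∈ Ici s0, 0 < g s)
    (hf_diff : ContDiffOn ℝ 1 f (Ici s0))
    (hf_deriv : 0 < derivWithin f (Ici s0) s0)
    (h_int : IntegrableOn (fun s => g s / (f s) ^ 2) (Ioi s0)) :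
    IntegrableOn
      (fun s => 2 * (g s / f s) * (f s0 / Real.sqrt ((f s) ^ 2 - (f s0) ^ 2)))
      (Ioi s0) := by
  set F : ℝ → ℝ := fun s => 2 * (g s / f s) * (f s0 / Real.sqrt ((f s) ^ 2 - (f s0) ^ 2))
    with hF
  set m := derivWithin f (Ici s0) s0 / 2 with hm
  have hm_pos : 0 < m := by positivity
  -- continuity of derivWithin
  have hderiv_cont : ContinuousOn (derivWithin f (Ici s0)) (Ici s0) :=
    hf_diff.continuousOn_derivWithin (uniqueDiffOn_Ici s0) le_rfl
  -- find s1 > s0 with derivWithin ≥ m on Icc s0 s1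
  obtain ⟨s1, hs1_gt, hs1_deriv⟩ :
      ∃ s1, s0 < s1 ∧ ∀ x ∈ Icc s0 s1, m ≤ derivWithin f (Ici s0) x := by
    have hc := hderiv_cont s0 (self_mem_Ici)
    have : ∀ᶠ x in nhdsWithin s0 (Ici s0), m < derivWithin f (Ici s0) x :=
      hc.eventually_const_lt (by linarith)
    rw [eventually_iff, Metric.mem_nhdsWithin_iff] at this
    obtain ⟨ε, hε, hball⟩ := this
    refine ⟨s0 + ε/2, by linarith, fun x hx => ?_⟩
    have hd : x ∈ Metric.ball s0 ε := by
      rw [Metric.mem_ball, Real.dist_eq, abs_of_nonneg (by linarith [hx.1])]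
      linarith [hx.2]
    exact le_of_lt (hball ⟨hd, hx.1⟩)
  have hmono : MonotoneOn f (Ici s0) := hf_mono.monotoneOn
  have hf_le : ∀ s, s0 ≤ s → f s0 ≤ f s := fun s hs => hmono self_mem_Ici hs hs
  have hf_lt : ∀ s, s0 < s → f s0 < f s := fun s hs => hf_mono self_mem_Ici hs.le hs
  have hf_pos' : ∀ s, s0 ≤ s → 0 < f s := fun s hs => lt_of_lt_of_le hf_pos (hf_le s hs)
  have hsq_pos : ∀ s, s0 < s → 0 < f s ^ 2 - f s0 ^ 2 := by
    intro s hs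
    have := hf_lt s hs
    nlinarith [hf_pos]
  -- MVT lower bound on Icc s0 s1
  have hMVT : ∀ s ∈ Icc s0 s1, m * (s - s0) ≤ f s - f s0 := by
    have hderiv_eq : ∀ x ∈ Ioo s0 s1, m ≤ deriv f x := by
      intro x hx
      have hnx : Ici s0 ∈ nhds x := Ici_mem_nhds hx.1
      rw [← derivWithin_of_mem_nhds hnx]
      exact hs1_deriv x ⟨hx.1.le, hx.2.le⟩
    have hdiff : DifferentiableOn ℝ f (interior (Icc s0 s1)) := by
      rw [interior_Icc]
      intro x hx
      have hnx : Ici s0 ∈ nhds x := Ici_mem_nhds hx.1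
      exact (((hf_diff.differentiableOn one_ne_zero) x hx.1.le).differentiableAt
        hnx).differentiableWithinAt
    intro s hs
    have := (convex_Icc s0 s1).mul_sub_le_image_sub_of_le_deriv
      (hf_cont.mono Icc_subset_Ici_self) hdiff
      (by rw [interior_Icc]; exact hderiv_eq)
      s0 ⟨le_rfl, hs1_gt.le⟩ s hs hs.1
    linarith [this]
  -- bound for g on the compact piece
  obtain ⟨G, hG⟩ := isCompact_Icc.exists_bound_of_continuousOn
    (hg_cont.mono (Icc_subset_Ici_self : Icc s0 s1 ⊆ Ici s0))
  have hG_pos : 0 < G :=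
    lt_of_lt_of_le (hg_pos s0 self_mem_Ici)
      (le_trans (le_abs_self _) (hG s0 ⟨le_rfl, hs1_gt.le⟩))
  -- nonnegativity of F on Ioi s0
  have hF_nonneg : ∀ s, s0 < s → 0 ≤ F s := by
    intro s hs
    have h1 := hg_pos s hs.le
    have h2 := hf_pos' s hs.le
    have h3 := Real.sqrt_nonneg (f s ^ 2 - f s0 ^ 2)
    positivity
  -- continuity of F on Ioi s0
  have hF_cont : ContinuousOn F (Ioi s0) := by
    apply ContinuousOn.mul
    · exact continuousOn_const.mul ((hg_cont.mono Ioi_subset_Ici_self).div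
        (hf_cont.mono Ioi_subset_Ici_self) (fun s hs => (hf_pos' s (le_of_lt hs)).ne'))
    · apply ContinuousOn.div continuousOn_const
      · exact Real.continuous_sqrt.comp_continuousOn
          (((hf_cont.mono Ioi_subset_Ici_self).pow 2).sub continuousOn_const)
      · intro s hs
        exact (Real.sqrt_pos.mpr (hsq_pos s hs)).ne'
  have hF_meas1 : AEStronglyMeasurable F (volume.restrict (Ioc s0 s1)) :=
    (hF_cont.mono Ioc_subset_Ioi_self).aestronglyMeasurable measurableSet_Ioc
  have hF_meas2 : AEStronglyMeasurable F (volume.restrict (Ioi s1)) :=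
    (hF_cont.mono (Ioi_subset_Ioi hs1_gt.le)).aestronglyMeasurable measurableSet_Ioi
  rw [← Ioc_union_Ioi_eq_Ioi hs1_gt.le]
  apply MeasureTheory.IntegrableOn.union
  · -- Ioc s0 s1
    set c := Real.sqrt (m * f s0) with hc
    have hc_pos : 0 < c := Real.sqrt_pos.mpr (by positivity)
    set C1 := 2 * G / c with hC1
    have hb1 : IntegrableOn (fun s => C1 * (s - s0) ^ (-(1/2) : ℝ)) (Ioc s0 s1) := by
      have h1 : IntervalIntegrable (fun x : ℝ => x ^ (-(1/2) : ℝ)) volume 0 (s1 - s0) :=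
        intervalIntegral.intervalIntegrable_rpow' (by norm_num)
      have h2 := h1.comp_sub_right s0
      rw [zero_add, sub_add_cancel] at h2
      rw [intervalIntegrable_iff, uIoc_of_le hs1_gt.le] at h2
      exact h2.const_mul C1
    apply Integrable.mono' hb1 hF_meas1
    refine (ae_restrict_iff' measurableSet_Ioc).mpr (ae_of_all _ fun s hs => ?_)
    have hs0 : s0 < s := hs.1
    have hspos : 0 < s - s0 := by linarith
    rw [Real.norm_eq_abs, abs_of_nonneg (hF_nonneg s hs0)]
    have hfs := hf_le s hs0.le
    have hgsG : g s ≤ G := le_trans (le_abs_self _) (hG s ⟨hs0.le, hs.2⟩)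
    have hsqrt_lb : c * Real.sqrt (s - s0) ≤ Real.sqrt (f s ^ 2 - f s0 ^ 2) := by
      rw [hc, ← Real.sqrt_mul (by positivity)]
      apply Real.sqrt_le_sqrt
      have hmvt := hMVT s ⟨hs0.le, hs.2⟩
      nlinarith [hf_pos, hm_pos, hspos]
    have step1 : F s ≤ 2 * (G / f s0) * (f s0 / (c * Real.sqrt (s - s0))) := by
      simp only [hF]
      have hd1 : 0 < c * Real.sqrt (s - s0) := by positivity
      gcongr
    refine le_trans step1 (le_of_eq ?_)
    have hcne : c ≠ 0 := hc_pos.ne'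
    rw [Real.rpow_neg hspos.le, ← Real.sqrt_eq_rpow, hC1]
    field_simp
  · -- Ioi s1
    set r := f s0 ^ 2 / f s1 ^ 2 with hr
    have hf1 : f s0 < f s1 := hf_lt s1 hs1_gt
    have hf1_pos : 0 < f s1 := lt_trans hf_pos hf1
    have hr_lt : r < 1 := by
      rw [hr, div_lt_one (by positivity)]
      nlinarith
    have hr_pos : 0 < 1 - r := by linarith
    set C2 := 2 * f s0 / Real.sqrt (1 - r) with hC2
    have hb2 : IntegrableOn (fun s => C2 * (g s / f s ^ 2)) (Ioi s1) :=
      (h_int.mono_set (Ioi_subset_Ioi hs1_gt.le)).const_mul C2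
    apply Integrable.mono' hb2 hF_meas2
    refine (ae_restrict_iff' measurableSet_Ioi).mpr (ae_of_all _ fun s hs => ?_)
    have hs1s : s1 < s := hs
    have hs0s : s0 < s := lt_trans hs1_gt hs1s
    rw [Real.norm_eq_abs, abs_of_nonneg (hF_nonneg s hs0s)]
    have hfs1 : f s1 ≤ f s := hmono hs1_gt.le hs0s.le hs1s.le
    have hfs_pos : 0 < f s := hf_pos' s hs0s.le
    have hsqrt_lb : Real.sqrt (1 - r) * f s ≤ Real.sqrt (f s ^ 2 - f s0 ^ 2) := by
      have : Real.sqrt (1 - r) * f s = Real.sqrt ((1 - r) * f s ^ 2) := by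
        rw [Real.sqrt_mul hr_pos.le, Real.sqrt_sq hfs_pos.le]
      rw [this]
      apply Real.sqrt_le_sqrt
      have hkey : f s0 ^ 2 ≤ r * f s ^ 2 := by
        have h1 : r * f s1 ^ 2 = f s0 ^ 2 := by
          rw [hr]; field_simp
        have hr0 : (0:ℝ) ≤ r := by positivity
        have h2 : r * f s1 ^ 2 ≤ r * f s ^ 2 :=
          mul_le_mul_of_nonneg_left (pow_le_pow_left₀ hf1_pos.le hfs1 2) hr0
        linarith
      nlinarith
    have step1 : F s ≤ 2 * (g s / f s) * (f s0 / (Real.sqrt (1 - r) * f s)) := by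
      simp only [hF]
      have hd1 : 0 < Real.sqrt (1 - r) * f s := by positivity
      have hgs := (hg_pos s hs0s.le).le
      gcongr
    refine le_trans step1 (le_of_eq ?_)
    rw [hC2]
    have hsr : (0:ℝ) < Real.sqrt (1 - r) := Real.sqrt_pos.mpr hr_pos
    field_simp
end

section
/- Let f(s) = f₀ + a s^k with f₀, a > 0, k ≥ 1, and g(s) = b s^j with b > 0, j > −1, on (0,1]. If k = 2(j+1), then there exist constants C > 0 and α > 0 such that the separation integral L(s0) near the turning point satisfies L(s0) ≥ −C log(s0) for all sufficiently small s0 > 0; in particular L(s0) → ∞ as s0 → 0⁺. -/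
set_option maxHeartbeats 1000000

open MeasureTheory Set Filter

private lemma sep_aux (f₀ a b k j : ℝ) (hf₀ : 0 < f₀) (ha : 0 < a) (hk : 1 ≤ k)
    (hb : 0 < b) (hj : -1 < j) (hkj : k = 2 * (j + 1))
    {s0 : ℝ} (hs0 : 0 < s0) (hs1 : s0 < 1) :
    (b * f₀ / ((f₀ + a) * Real.sqrt (2 * a * (f₀ + a)))) * (-Real.log s0) ≤
      ∫ s in s0..1, (b * s ^ j / (f₀ + a * s ^ k)) *
        ((f₀ + a * s0 ^ k) /
          Real.sqrt ((f₀ + a * s ^ k) ^ 2 - (f₀ + a * s0 ^ k) ^ 2)) := by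
  have hk0 : (0:ℝ) < k := lt_of_lt_of_le one_pos hk
  set M := Real.sqrt (2 * a * (f₀ + a)) with hM
  have hMpos : 0 < M := Real.sqrt_pos.2 (by positivity)
  set c := b * f₀ / ((f₀ + a) * M) with hc
  have hcpos : 0 < c := by positivity
  have hs0k : 0 < s0 ^ k := Real.rpow_pos_of_pos hs0 k
  set F0 := f₀ + a * s0 ^ k with hF0
  have hF0pos : 0 < F0 := by positivity
  have hf₀F0 : f₀ ≤ F0 := by rw [hF0]; nlinarith
  set h : ℝ → ℝ := fun s => (b * s ^ j / (f₀ + a * s ^ k)) *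
      (F0 / Real.sqrt ((f₀ + a * s ^ k) ^ 2 - F0 ^ 2)) with hh
  set m := Real.sqrt (2 * a * f₀ * s0 ^ (k - 1)) with hm
  have hs0k1 : 0 < s0 ^ (k - 1) := Real.rpow_pos_of_pos hs0 _
  have hmpos : 0 < m := Real.sqrt_pos.2 (by positivity)
  set Cb := b * (s0 ^ j + 1) * F0 / (f₀ * m) with hCb
  -- pointwise estimates on Ioc s0 1
  have hboth : ∀ s ∈ Ioc s0 1, c / s ≤ h s ∧ ‖h s‖ ≤ Cb * (s - s0) ^ (-(1/2) : ℝ) := by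
    rintro s ⟨hss0, hs1'⟩
    have hs : 0 < s := hs0.trans hss0
    have hsj : 0 < s ^ j := Real.rpow_pos_of_pos hs j
    have hsk : 0 < s ^ k := Real.rpow_pos_of_pos hs k
    have hsk1 : s ^ k ≤ 1 := Real.rpow_le_one hs.le hs1' hk0.le
    have hs0k_lt : s0 ^ k < s ^ k := Real.rpow_lt_rpow hs0.le hss0 hk0
    set F := f₀ + a * s ^ k with hF
    have hFpos : 0 < F := by positivity
    have hf₀F : f₀ ≤ F := by rw [hF]; nlinarith
    have hFle : F ≤ f₀ + a := by rw [hF]; nlinarith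
    have hF0le : F0 ≤ f₀ + a := by rw [hF0]; nlinarith
    have hD : F ^ 2 - F0 ^ 2 = a * (s ^ k - s0 ^ k) * (F + F0) := by
      rw [hF, hF0]; ring
    have hDpos : 0 < F ^ 2 - F0 ^ 2 := by
      rw [hD]
      exact mul_pos (mul_pos ha (sub_pos.2 hs0k_lt)) (by positivity)
    have hSpos : 0 < Real.sqrt (F ^ 2 - F0 ^ 2) := Real.sqrt_pos.2 hDpos
    have e1 : h s = b * s ^ j * F0 / (F * Real.sqrt (F ^ 2 - F0 ^ 2)) := by
      simp only [hh]; rw [div_mul_div_comm]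
    constructor
    · -- lower bound
      have hsj1 : 0 < s ^ (j + 1) := Real.rpow_pos_of_pos hs _
      have hsq : s ^ k = (s ^ (j + 1)) ^ 2 := by
        rw [hkj, show 2 * (j + 1) = (j + 1) * 2 by ring, Real.rpow_mul hs.le,
          show ((2:ℝ)) = ((2:ℕ):ℝ) by norm_num, Real.rpow_natCast]
      have h1 : F ^ 2 - F0 ^ 2 ≤ (2 * a * (f₀ + a)) * (s ^ (j + 1)) ^ 2 := by
        rw [hD, ← hsq]
        calc a * (s ^ k - s0 ^ k) * (F + F0)
            ≤ a * s ^ k * (2 * (f₀ + a)) := by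
              apply mul_le_mul (by nlinarith) (by nlinarith) (by positivity) (by positivity)
          _ = 2 * a * (f₀ + a) * s ^ k := by ring
      have hSle : Real.sqrt (F ^ 2 - F0 ^ 2) ≤ M * s ^ (j + 1) := by
        calc Real.sqrt (F ^ 2 - F0 ^ 2)
            ≤ Real.sqrt ((2 * a * (f₀ + a)) * (s ^ (j + 1)) ^ 2) := Real.sqrt_le_sqrt h1
          _ = M * s ^ (j + 1) := by
              rw [Real.sqrt_mul (by positivity), Real.sqrt_sq hsj1.le]
      have e2 : c / s = b * f₀ * s ^ j / ((f₀ + a) * (M * s ^ (j + 1))) := by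
        have hfa : (0:ℝ) < f₀ + a := by positivity
        rw [hc, Real.rpow_add_one hs.ne' j]
        field_simp
      rw [e1, e2]
      apply div_le_div₀ (by positivity) ?_ (by positivity) ?_
      · calc b * f₀ * s ^ j = b * s ^ j * f₀ := by ring
          _ ≤ b * s ^ j * F0 := mul_le_mul_of_nonneg_left hf₀F0 (by positivity)
      · exact mul_le_mul hFle hSle (Real.sqrt_nonneg _) (by positivity)
    · -- upper bound
      have hsub : 0 < s - s0 := sub_pos.2 hss0
      have hP : s0 ^ (k - 1) ≤ s ^ (k - 1) := Real.rpow_le_rpow hs0.le hss0.le (by linarith)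
      have hsk_eq : s ^ k = s ^ (k - 1) * s := by
        have := Real.rpow_add_one hs.ne' (k - 1)
        rw [← this]; congr 1; ring
      have hs0k_eq : s0 ^ k = s0 ^ (k - 1) * s0 := by
        have := Real.rpow_add_one hs0.ne' (k - 1)
        rw [← this]; congr 1; ring
      have hgap : s0 ^ (k - 1) * (s - s0) ≤ s ^ k - s0 ^ k := by
        rw [hsk_eq, hs0k_eq]
        nlinarith [mul_le_mul_of_nonneg_right hP hs.le]
      have hD2 : (2 * a * f₀ * s0 ^ (k - 1)) * (s - s0) ≤ F ^ 2 - F0 ^ 2 := by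
        rw [hD]
        calc (2 * a * f₀ * s0 ^ (k - 1)) * (s - s0)
            = (a * (s0 ^ (k - 1) * (s - s0))) * (2 * f₀) := by ring
          _ ≤ (a * (s ^ k - s0 ^ k)) * (F + F0) := by
              apply mul_le_mul
              · exact mul_le_mul_of_nonneg_left hgap ha.le
              · nlinarith
              · positivity
              · have : (0:ℝ) ≤ s0 ^ (k - 1) * (s - s0) := by positivity
                nlinarith
          _ = a * (s ^ k - s0 ^ k) * (F + F0) := by ring
      have hSge : m * Real.sqrt (s - s0) ≤ Real.sqrt (F ^ 2 - F0 ^ 2) := by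
        rw [hm, ← Real.sqrt_mul (by positivity)]
        exact Real.sqrt_le_sqrt hD2
      have hsjle : s ^ j ≤ s0 ^ j + 1 := by
        have hs0j : 0 < s0 ^ j := Real.rpow_pos_of_pos hs0 j
        rcases le_or_gt 0 j with hj0 | hj0
        · have : s ^ j ≤ 1 := Real.rpow_le_one hs.le hs1' hj0
          linarith
        · have hanti := Real.antitoneOn_rpow_Ioi_of_exponent_nonpos hj0.le
            (mem_Ioi.2 hs0) (mem_Ioi.2 hs) hss0.le
          linarith
      have hnn : 0 ≤ h s := by
        rw [e1]; positivity
      have hrw : (s - s0) ^ (-(1/2) : ℝ) = 1 / Real.sqrt (s - s0) := by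
        rw [Real.rpow_neg hsub.le, Real.sqrt_eq_rpow]; norm_num
      have hsqsubpos : 0 < Real.sqrt (s - s0) := Real.sqrt_pos.2 hsub
      rw [Real.norm_eq_abs, abs_of_nonneg hnn, e1, hrw]
      have e3 : Cb * (1 / Real.sqrt (s - s0)) =
          b * (s0 ^ j + 1) * F0 / (f₀ * (m * Real.sqrt (s - s0))) := by
        rw [hCb]; field_simp
      rw [e3]
      apply div_le_div₀ (by positivity) ?_ (by positivity) ?_
      · exact mul_le_mul_of_nonneg_right (mul_le_mul_of_nonneg_left hsjle hb.le) hF0pos.le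
      · exact mul_le_mul hf₀F hSge (by positivity) hFpos.le
  -- continuity of h on Ioc s0 1
  have hcont : ContinuousOn h (Ioc s0 1) := by
    rintro s hsmem
    obtain ⟨hss0, hs1'⟩ := hsmem
    have hs : 0 < s := hs0.trans hss0
    have hs0k_lt : s0 ^ k < s ^ k := Real.rpow_lt_rpow hs0.le hss0 hk0
    have hsk : 0 < s ^ k := Real.rpow_pos_of_pos hs k
    have hFpos : 0 < f₀ + a * s ^ k := by positivity
    have hDpos : 0 < (f₀ + a * s ^ k) ^ 2 - F0 ^ 2 := by
      have hident : (f₀ + a * s ^ k) ^ 2 - F0 ^ 2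
          = a * (s ^ k - s0 ^ k) * ((f₀ + a * s ^ k) + F0) := by rw [hF0]; ring
      rw [hident]
      exact mul_pos (mul_pos ha (sub_pos.2 hs0k_lt)) (by positivity)
    have cj : ContinuousAt (fun s : ℝ => s ^ j) s :=
      Real.continuousAt_rpow_const s j (Or.inl hs.ne')
    have ck : ContinuousAt (fun s : ℝ => s ^ k) s :=
      Real.continuousAt_rpow_const s k (Or.inl hs.ne')
    have cF : ContinuousAt (fun s : ℝ => f₀ + a * s ^ k) s :=
      continuousAt_const.add (continuousAt_const.mul ck)
    have cS : ContinuousAt (fun s : ℝ => Real.sqrt ((f₀ + a * s ^ k) ^ 2 - F0 ^ 2)) s :=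
      Real.continuous_sqrt.continuousAt.comp ((cF.pow 2).sub continuousAt_const)
    have : ContinuousAt h s := by
      apply ContinuousAt.mul
      · exact (continuousAt_const.mul cj).div cF hFpos.ne'
      · exact continuousAt_const.div cS (Real.sqrt_pos.2 hDpos).ne'
    exact this.continuousWithinAt
  -- integrability of h
  have hmeas : AEStronglyMeasurable h (volume.restrict (Ioc s0 1)) :=
    hcont.aestronglyMeasurable measurableSet_Ioc
  have gint : IntervalIntegrable (fun s => Cb * (s - s0) ^ (-(1/2) : ℝ)) volume s0 1 := by
    have h0 : IntervalIntegrable (fun x : ℝ => x ^ (-(1/2) : ℝ)) volume 0 (1 - s0) :=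
      intervalIntegral.intervalIntegrable_rpow' (by norm_num)
    have h1 := h0.comp_sub_right s0
    simp only [zero_add, sub_add_cancel] at h1
    exact h1.const_mul Cb
  have hint : IntegrableOn h (Ioc s0 1) volume := by
    have gint' : IntegrableOn (fun s => Cb * (s - s0) ^ (-(1/2) : ℝ)) (Ioc s0 1) volume :=
      (intervalIntegrable_iff_integrableOn_Ioc_of_le hs1.le).1 gint
    refine Integrable.mono' gint' hmeas ?_
    filter_upwards [ae_restrict_mem measurableSet_Ioc] with s hsmem
    exact (hboth s hsmem).2
  -- comparison
  have hcs : IntervalIntegrable (fun s => c / s) volume s0 1 := by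
    apply ContinuousOn.intervalIntegrable
    apply ContinuousOn.div continuousOn_const continuousOn_id
    intro x hx
    rw [uIcc_of_le hs1.le] at hx
    exact ne_of_gt (lt_of_lt_of_le hs0 hx.1)
  have hmono : (∫ s in s0..1, c / s) ≤ ∫ s in s0..1, h s := by
    rw [intervalIntegral.integral_of_le hs1.le, intervalIntegral.integral_of_le hs1.le]
    refine setIntegral_mono_on
      ((intervalIntegrable_iff_integrableOn_Ioc_of_le hs1.le).1 hcs) hint
      measurableSet_Ioc ?_
    intro s hsmem
    exact (hboth s hsmem).1
  have hcalc : (∫ s in s0..1, c / s) = c * (-Real.log s0) := by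
    have hfun : (fun s : ℝ => c / s) = fun s : ℝ => c * s⁻¹ := by
      funext s; rw [div_eq_mul_inv]
    rw [hfun, intervalIntegral.integral_const_mul, integral_inv]
    · rw [one_div, Real.log_inv]
    · intro hmem
      rw [uIcc_of_le hs1.le] at hmem
      exact absurd hmem.1 (not_le.2 hs0)
  calc c * (-Real.log s0) = ∫ s in s0..1, c / s := hcalc.symm
    _ ≤ ∫ s in s0..1, h s := hmono

/-- Marginal case `k = 2(j+1)`: for `f(s) = f₀ + a s^k`, `g(s) = b s^j`, the
near-turning-point separation integral diverges at least logarithmically as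
`s0 → 0⁺`; in particular it tends to infinity. -/
theorem separation_log_divergence
    (f₀ a b k j : ℝ) (hf₀ : 0 < f₀) (ha : 0 < a) (hk : 1 ≤ k)
    (hb : 0 < b) (hj : -1 < j) (hkj : k = 2 * (j + 1)) :
    (∃ C > (0:ℝ), ∀ᶠ s0 in nhdsWithin 0 (Ioi 0),
      2 * (∫ s in s0..1, (b * s ^ j / (f₀ + a * s ^ k)) *
        ((f₀ + a * s0 ^ k) /
          Real.sqrt ((f₀ + a * s ^ k) ^ 2 - (f₀ + a * s0 ^ k) ^ 2)))
        ≥ -C * Real.log s0)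
    ∧ Tendsto
      (fun s0 => 2 * ∫ s in s0..1, (b * s ^ j / (f₀ + a * s ^ k)) *
        ((f₀ + a * s0 ^ k) /
          Real.sqrt ((f₀ + a * s ^ k) ^ 2 - (f₀ + a * s0 ^ k) ^ 2)))
      (nhdsWithin 0 (Ioi 0)) atTop := by
  set c := b * f₀ / ((f₀ + a) * Real.sqrt (2 * a * (f₀ + a))) with hc
  have hcpos : 0 < c := by
    have : 0 < Real.sqrt (2 * a * (f₀ + a)) := Real.sqrt_pos.2 (by positivity)
    positivity
  have hev : ∀ᶠ s0 in nhdsWithin (0:ℝ) (Ioi 0),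
      2 * (∫ s in s0..1, (b * s ^ j / (f₀ + a * s ^ k)) *
        ((f₀ + a * s0 ^ k) /
          Real.sqrt ((f₀ + a * s ^ k) ^ 2 - (f₀ + a * s0 ^ k) ^ 2)))
        ≥ -(2 * c) * Real.log s0 := by
    filter_upwards [Ioo_mem_nhdsGT_of_mem (show (0:ℝ) ∈ Ico (0:ℝ) 1 from ⟨le_refl 0, one_pos⟩)]
      with s0 hs0
    have := sep_aux f₀ a b k j hf₀ ha hk hb hj hkj hs0.1 hs0.2
    rw [← hc] at this
    nlinarith [this]
  refine ⟨⟨2 * c, by positivity, hev⟩, ?_⟩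
  refine tendsto_atTop_mono' _ (hev.mono fun s0 h => h) ?_
  exact Real.tendsto_log_nhdsGT_zero.const_mul_atBot_of_neg (by linarith)
end

section
/- Let f(s) = a s^k and g(s) = b s^j on (0,∞) with a, b > 0 and k > j + 1 > 0. Then the separation distance satisfies the exact scaling law L(s0) = C · s0^{j+1−k}, where C = 2(b/a) ∫_1^∞ u^{j−k}/√(u^{2k} − 1) du is a finite positive constant independent of s0. -/
open MeasureTheory Set

lemma sqrt_rpow_two_mul (k : ℝ) {u : ℝ} (hu : 0 ≤ u) : Real.sqrt (u ^ (2*k)) = u ^ k := by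
  rw [show 2*k = k*2 by ring, Real.rpow_mul hu, Real.rpow_two, Real.sqrt_sq (Real.rpow_nonneg hu k)]

lemma g_meas (j k : ℝ) : Measurable (fun u : ℝ => u ^ (j - k) / Real.sqrt (u ^ (2 * k) - 1)) := by
  fun_prop

lemma g_nonneg (j k : ℝ) {u : ℝ} (hu : 1 < u) :
    0 ≤ u ^ (j - k) / Real.sqrt (u ^ (2 * k) - 1) :=
  div_nonneg (Real.rpow_nonneg (by linarith) _) (Real.sqrt_nonneg _)

lemma g_pos (j k : ℝ) (hk : 0 < k) {u : ℝ} (hu : 1 < u) :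
    0 < u ^ (j - k) / Real.sqrt (u ^ (2 * k) - 1) := by
  apply div_pos (Real.rpow_pos_of_pos (by linarith) _)
  rw [Real.sqrt_pos]
  have : (1:ℝ) < u ^ (2*k) := Real.one_lt_rpow_iff_of_pos (by linarith) |>.mpr (Or.inl ⟨hu, by linarith⟩)
  linarith

lemma g_integrable (j k : ℝ) (hj : 0 < j + 1) (hk : j + 1 < k) (hk1 : 1 ≤ k) :
    IntegrableOn (fun u => u ^ (j - k) / Real.sqrt (u ^ (2 * k) - 1)) (Ioi 1) := by
  have hmeas : AEStronglyMeasurable (fun u : ℝ => u ^ (j - k) / Real.sqrt (u ^ (2 * k) - 1)) volume := (g_meas j k).aestronglyMeasurable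
  rw [← Ioc_union_Ioi_eq_Ioi (le_of_lt one_lt_two)]
  apply IntegrableOn.union
  · -- on Ioc 1 2: bound by (u-1)^(-1/2)
    have hbd : IntegrableOn (fun u : ℝ => (u - 1) ^ (-(1/2) : ℝ)) (Ioc 1 2) := by
      have h := (intervalIntegral.intervalIntegrable_rpow' (a := 0) (b := 1)
        (r := -(1/2)) (by norm_num)).comp_sub_right 1
      norm_num at h
      simpa using h.1
    refine Integrable.mono' hbd hmeas.restrict ?_
    rw [ae_restrict_iff' measurableSet_Ioc]
    filter_upwards with u hu
    obtain ⟨hu1, hu2⟩ := hu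
    have hu0 : (0:ℝ) < u := by linarith
    rw [Real.norm_of_nonneg (g_nonneg j k hu1)]
    have h1 : u ^ (j - k) ≤ 1 :=
      Real.rpow_le_one_of_one_le_of_nonpos (by linarith) (by linarith)
    have h2 : Real.sqrt (u - 1) ≤ Real.sqrt (u ^ (2*k) - 1) := by
      apply Real.sqrt_le_sqrt
      have : u ^ (1:ℝ) ≤ u ^ (2*k) :=
        Real.rpow_le_rpow_of_exponent_le (le_of_lt hu1) (by linarith)
      rw [Real.rpow_one] at this; linarith
    have h3 : (0:ℝ) < Real.sqrt (u - 1) := Real.sqrt_pos.mpr (by linarith)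
    calc u ^ (j - k) / Real.sqrt (u ^ (2*k) - 1) ≤ 1 / Real.sqrt (u - 1) := by
          exact div_le_div₀ zero_le_one h1 h3 h2
      _ = (u - 1) ^ (-(1/2) : ℝ) := by
          rw [Real.rpow_neg (by linarith), ← Real.sqrt_eq_rpow, one_div]
  · -- on Ioi 2: bound by √2 * u^(j-2k)
    have hint : IntegrableOn (fun u : ℝ => Real.sqrt 2 * u ^ (j - 2*k)) (Ioi 2) :=
      (integrableOn_Ioi_rpow_of_lt (by linarith) two_pos).const_mul _
    refine Integrable.mono' hint hmeas.restrict ?_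
    rw [ae_restrict_iff' measurableSet_Ioi]
    filter_upwards with u hu
    rw [mem_Ioi] at hu
    have hu0 : (0:ℝ) < u := by linarith
    have hu1 : (1:ℝ) < u := by linarith
    rw [Real.norm_of_nonneg (g_nonneg j k hu1)]
    have hk2 : (2:ℝ) ≤ u ^ (2*k) := by
      calc (2:ℝ) = 2 ^ (1:ℝ) := (Real.rpow_one 2).symm
        _ ≤ 2 ^ (2*k) := Real.rpow_le_rpow_of_exponent_le one_le_two (by linarith)
        _ ≤ u ^ (2*k) := Real.rpow_le_rpow (by norm_num) hu.le (by linarith)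
    have hden : u ^ k / Real.sqrt 2 ≤ Real.sqrt (u ^ (2*k) - 1) := by
      rw [div_le_iff₀ (Real.sqrt_pos.mpr two_pos), ← sqrt_rpow_two_mul k hu0.le,
        ← Real.sqrt_mul (by linarith : (0:ℝ) ≤ u ^ (2*k) - 1) 2]
      exact Real.sqrt_le_sqrt (by linarith)
    have hdenpos : 0 < u ^ k / Real.sqrt 2 :=
      div_pos (Real.rpow_pos_of_pos hu0 k) (Real.sqrt_pos.mpr two_pos)
    calc u ^ (j - k) / Real.sqrt (u ^ (2*k) - 1)
        ≤ u ^ (j - k) / (u ^ k / Real.sqrt 2) :=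
          div_le_div_of_nonneg_left (Real.rpow_nonneg hu0.le _) hdenpos hden
      _ = Real.sqrt 2 * u ^ (j - 2*k) := by
          have huu : u ^ (j - 2*k) = u ^ (j - k) / u ^ k := by
            rw [← Real.rpow_sub hu0]; ring_nf
          rw [huu, div_div_eq_mul_div]; ring

lemma rpow_two_mul (k : ℝ) {u : ℝ} (hu : 0 ≤ u) : u ^ (2*k) = (u ^ k)^2 := by
  rw [show 2*k = k*2 by ring, Real.rpow_mul hu, Real.rpow_two]

lemma g_integral_pos (j k : ℝ) (hk : 0 < k)
    (hint : IntegrableOn (fun u => u ^ (j - k) / Real.sqrt (u ^ (2 * k) - 1)) (Ioi 1)) :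
    0 < ∫ u in Ioi 1, u ^ (j - k) / Real.sqrt (u ^ (2 * k) - 1) := by
  refine (setIntegral_pos_iff_support_of_nonneg_ae ?_ hint).mpr ?_
  · filter_upwards [ae_restrict_mem measurableSet_Ioi] with u hu
    exact (g_pos j k hk hu).le
  · have hsub : Ioi (1:ℝ) ⊆ Function.support (fun u => u ^ (j - k) / Real.sqrt (u ^ (2 * k) - 1)) :=
      fun u hu => (g_pos j k hk hu).ne'
    calc (0:ENNReal) < volume (Ioi (1:ℝ)) := by rw [Real.volume_Ioi]; exact ENNReal.zero_lt_top
      _ ≤ volume (Function.support (fun u => u ^ (j - k) / Real.sqrt (u ^ (2 * k) - 1)) ∩ Ioi 1) :=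
        measure_mono (subset_inter hsub subset_rfl)

lemma main_subst (a b k j : ℝ) (ha : 0 < a) (hb : 0 < b) (hj : 0 < j + 1) (hk : j + 1 < k)
    (s0 : ℝ) (hs0 : 0 < s0) :
    (∫ s in Ioi s0, (b * s ^ j / (a * s ^ k)) *
        ((a * s0 ^ k) / Real.sqrt ((a * s ^ k) ^ 2 - (a * s0 ^ k) ^ 2)))
    = ((b / a) * s0 ^ (j - k)) * (s0 * ∫ u in Ioi 1, u ^ (j - k) / Real.sqrt (u ^ (2 * k) - 1)) := by
  have hk0 : 0 < k := by linarith
  have hcongr : ∀ s ∈ Ioi s0, (b * s ^ j / (a * s ^ k)) *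
      ((a * s0 ^ k) / Real.sqrt ((a * s ^ k) ^ 2 - (a * s0 ^ k) ^ 2))
      = ((b / a) * s0 ^ (j - k)) *
        ((s0⁻¹ * s) ^ (j - k) / Real.sqrt ((s0⁻¹ * s) ^ (2 * k) - 1)) := by
    intro s hs
    rw [mem_Ioi] at hs
    have hs' : 0 < s := hs0.trans hs
    have hu1 : 1 < s0⁻¹ * s := by
      rw [← div_eq_inv_mul]; exact (one_lt_div hs0).mpr hs
    have hu0 : 0 < s0⁻¹ * s := by linarith
    have hA : (a * s ^ k) ^ 2 - (a * s0 ^ k) ^ 2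
        = (a * s0 ^ k) ^ 2 * ((s0⁻¹ * s) ^ (2 * k) - 1) := by
      rw [rpow_two_mul k hu0.le, Real.mul_rpow (inv_nonneg.mpr hs0.le) hs'.le,
        Real.inv_rpow hs0.le]
      have h0 : s0 ^ k ≠ 0 := (Real.rpow_pos_of_pos hs0 k).ne'
      field_simp
    have hs0pos : 0 < a * s0 ^ k := mul_pos ha (Real.rpow_pos_of_pos hs0 k)
    have hsqrt : Real.sqrt ((a * s ^ k) ^ 2 - (a * s0 ^ k) ^ 2)
        = (a * s0 ^ k) * Real.sqrt ((s0⁻¹ * s) ^ (2 * k) - 1) := by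
      rw [hA, Real.sqrt_mul (sq_nonneg _), Real.sqrt_sq hs0pos.le]
    have hU : 0 < Real.sqrt ((s0⁻¹ * s) ^ (2 * k) - 1) := by
      rw [Real.sqrt_pos]
      have : (1:ℝ) < (s0⁻¹ * s) ^ (2*k) :=
        Real.one_lt_rpow_iff_of_pos hu0 |>.mpr (Or.inl ⟨hu1, by linarith⟩)
      linarith
    have e1 : (s0⁻¹ * s) ^ (j - k) = s ^ (j - k) / s0 ^ (j - k) := by
      rw [Real.mul_rpow (inv_nonneg.mpr hs0.le) hs'.le, Real.inv_rpow hs0.le,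
        inv_mul_eq_div]
    have e2 : s ^ (j - k) = s ^ j / s ^ k := Real.rpow_sub hs' j k
    rw [hsqrt, e1, e2]
    have h1 : a * s ^ k ≠ 0 := (mul_pos ha (Real.rpow_pos_of_pos hs' k)).ne'
    have h2 : s0 ^ (j - k) ≠ 0 := (Real.rpow_pos_of_pos hs0 _).ne'
    have h3 : s0 ^ k ≠ 0 := (Real.rpow_pos_of_pos hs0 k).ne'
    have ha' : a ≠ 0 := ha.ne'
    have h4 : s ^ k ≠ 0 := (Real.rpow_pos_of_pos hs' k).ne'
    have h5 : Real.sqrt ((s0⁻¹ * s) ^ (2 * k) - 1) ≠ 0 := hU.ne'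
    set U := Real.sqrt ((s0⁻¹ * s) ^ (2 * k) - 1) with hUdef
    set X := s ^ k with hX
    set Y := s0 ^ k with hY
    set J := s ^ j with hJ
    set W := s0 ^ (j - k) with hW
    field_simp
  rw [setIntegral_congr_fun measurableSet_Ioi hcongr, MeasureTheory.integral_const_mul,
    integral_comp_mul_left_Ioi (fun u => u ^ (j - k) / Real.sqrt (u ^ (2 * k) - 1)) s0
      (inv_pos.mpr hs0), inv_mul_cancel₀ hs0.ne', inv_inv, smul_eq_mul]


/-- Pure power case `f(s) = a s^k`, `g(s) = b s^j`, `k > j+1 > 0`, `k ≥ 1`: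
the separation distance obeys the exact scaling law `L(s0) = C · s0^(j+1−k)`,
where `C = 2(b/a) ∫_1^∞ u^(j−k)/√(u^(2k)−1) du` is a finite positive constant. -/
theorem separation_scaling_law
    (a b k j : ℝ) (ha : 0 < a) (hb : 0 < b) (hj : 0 < j + 1) (hk : j + 1 < k)
    (hk1 : 1 ≤ k) :
    IntegrableOn (fun u => u ^ (j - k) / Real.sqrt (u ^ (2 * k) - 1)) (Ioi 1)
    ∧ 0 < 2 * (b / a) * ∫ u in Ioi 1, u ^ (j - k) / Real.sqrt (u ^ (2 * k) - 1)
    ∧ ∀ s0 : ℝ, 0 < s0 →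
      2 * (∫ s in Ioi s0, (b * s ^ j / (a * s ^ k)) *
        ((a * s0 ^ k) / Real.sqrt ((a * s ^ k) ^ 2 - (a * s0 ^ k) ^ 2)))
      = (2 * (b / a) * ∫ u in Ioi 1, u ^ (j - k) / Real.sqrt (u ^ (2 * k) - 1))
          * s0 ^ (j + 1 - k) := by
  have hint := g_integrable j k hj hk hk1
  have hI := g_integral_pos j k (by linarith) hint
  refine ⟨hint, mul_pos (mul_pos two_pos (div_pos hb ha)) hI, ?_⟩
  intro s0 hs0
  rw [main_subst a b k j ha hb hj hk s0 hs0,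
    show j + 1 - k = (j - k) + 1 by ring, Real.rpow_add_one hs0.ne']
  ring
end

section
/- With f(s) = a s^k, g(s) = b s^j, a, b > 0, k > j + 1 > 0, the renormalized energy E(s0) = f(s0) L(s0) + 2∫_{s0}^∞ (g/f)(√(f²−f(s0)²) − f) ds − 2∫_0^{s0} g ds scales as E(s0) = −D · s0^{j+1} for a constant D, and hence E = −d' · L^{−(j+1)/(k−j−1)} for some constant d' depending only on a, b, j, k. -/
open MeasureTheory Set

private lemma aux_integrable (k j : ℝ) (hj : 0 < j + 1) (hk : j + 1 < k) (hk1 : 1 ≤ k) :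
    IntegrableOn (fun u : ℝ => u ^ (j - k) / Real.sqrt ((u ^ k) ^ 2 - 1)) (Ioi 1) := by
  have hmeas : Measurable (fun u : ℝ => u ^ (j - k) / Real.sqrt ((u ^ k) ^ 2 - 1)) := by
    fun_prop
  rw [← Ioc_union_Ioi_eq_Ioi (by norm_num : (1:ℝ) ≤ 2)]
  apply IntegrableOn.union
  · -- on (1,2], bound by (u-1)^(-1/2)
    have hbound : IntegrableOn (fun u : ℝ => (u - 1) ^ (-(1/2) : ℝ)) (Ioc 1 2) := by
      have h := (intervalIntegral.intervalIntegrable_rpow'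
        (show (-1:ℝ) < -(1/2) by norm_num) (a := 0) (b := 1)).comp_sub_right 1
      norm_num at h
      rw [intervalIntegrable_iff_integrableOn_Ioc_of_le (by norm_num)] at h
      exact h
    apply hbound.mono' hmeas.aestronglyMeasurable
    filter_upwards [ae_restrict_mem measurableSet_Ioc] with u hu
    obtain ⟨h1u, hu2⟩ := hu
    have h0u : (0:ℝ) < u := lt_trans one_pos h1u
    have huk : u ≤ u ^ k := by
      calc u = u ^ (1:ℝ) := (Real.rpow_one u).symm
        _ ≤ u ^ k := Real.rpow_le_rpow_of_exponent_le h1u.le hk1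
    have hsq : Real.sqrt (u - 1) ≤ Real.sqrt ((u ^ k) ^ 2 - 1) := by
      apply Real.sqrt_le_sqrt
      nlinarith
    have hpos : 0 < Real.sqrt (u - 1) := Real.sqrt_pos.2 (by linarith)
    have hnum : u ^ (j - k) ≤ 1 :=
      Real.rpow_le_one_of_one_le_of_nonpos h1u.le (by linarith)
    have hgnn : 0 ≤ u ^ (j - k) / Real.sqrt ((u ^ k) ^ 2 - 1) :=
      div_nonneg (Real.rpow_nonneg h0u.le _) (Real.sqrt_nonneg _)
    rw [Real.norm_eq_abs, abs_of_nonneg hgnn]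
    have heq : (u - 1) ^ (-(1/2) : ℝ) = 1 / Real.sqrt (u - 1) := by
      rw [Real.rpow_neg (by linarith), Real.sqrt_eq_rpow, one_div]
      norm_num
    rw [heq]
    exact div_le_div₀ zero_le_one hnum hpos hsq
  · -- on (2,∞), bound by 2 * u^(j-k-k)
    have hbound : IntegrableOn (fun u : ℝ => 2 * u ^ (j - k - k)) (Ioi 2) := by
      exact (integrableOn_Ioi_rpow_of_lt (by linarith) (by norm_num)).const_mul 2
    apply hbound.mono' hmeas.aestronglyMeasurable
    filter_upwards [ae_restrict_mem measurableSet_Ioi] with u hu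
    have h2u : (2:ℝ) < u := hu
    have h0u : (0:ℝ) < u := by linarith
    have huk : (2:ℝ) ≤ u ^ k := by
      calc (2:ℝ) ≤ u := h2u.le
        _ = u ^ (1:ℝ) := (Real.rpow_one u).symm
        _ ≤ u ^ k := Real.rpow_le_rpow_of_exponent_le (by linarith) hk1
    have hukpos : (0:ℝ) < u ^ k := by linarith
    have hs : u ^ k / 2 ≤ Real.sqrt ((u ^ k) ^ 2 - 1) := by
      rw [show u ^ k / 2 = Real.sqrt ((u ^ k / 2) ^ 2) by
        rw [Real.sqrt_sq (by linarith)]]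
      apply Real.sqrt_le_sqrt
      nlinarith
    have hgnn : 0 ≤ u ^ (j - k) / Real.sqrt ((u ^ k) ^ 2 - 1) :=
      div_nonneg (Real.rpow_nonneg h0u.le _) (Real.sqrt_nonneg _)
    rw [Real.norm_eq_abs, abs_of_nonneg hgnn]
    have hhalf : (0:ℝ) < u ^ k / 2 := by linarith
    calc u ^ (j - k) / Real.sqrt ((u ^ k) ^ 2 - 1)
        ≤ u ^ (j - k) / (u ^ k / 2) :=
          div_le_div_of_nonneg_left (Real.rpow_nonneg h0u.le _) hhalf hs
      _ = 2 * u ^ (j - k - k) := by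
          rw [Real.rpow_sub h0u (j - k) k]
          field_simp

/-- Pure power case: the renormalized energy scales as `E(s0) = −D s0^(j+1)`,
and eliminating `s0` against `L(s0) = C s0^(j+1−k)` yields
`E = −d'·L^{−(j+1)/(k−j−1)}`: a Coulomb-like non-confining potential. -/
theorem energy_scaling_law
    (a b k j : ℝ) (ha : 0 < a) (hb : 0 < b) (hj : 0 < j + 1) (hk : j + 1 < k)
    (hk1 : 1 ≤ k)
    (L E : ℝ → ℝ)
    (hL : ∀ s0 : ℝ, 0 < s0 →
      L s0 = 2 * ∫ s in Ioi s0, (b * s ^ j / (a * s ^ k)) *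
        ((a * s0 ^ k) / Real.sqrt ((a * s ^ k) ^ 2 - (a * s0 ^ k) ^ 2)))
    (hE : ∀ s0 : ℝ, 0 < s0 →
      E s0 = a * s0 ^ k * L s0
        + 2 * (∫ s in Ioi s0, (b * s ^ j / (a * s ^ k)) *
            (Real.sqrt ((a * s ^ k) ^ 2 - (a * s0 ^ k) ^ 2) - a * s ^ k))
        - 2 * ∫ s in Ioc 0 s0, b * s ^ j) :
    ∃ D d' : ℝ, ∀ s0 : ℝ, 0 < s0 →
      E s0 = -D * s0 ^ (j + 1)
      ∧ E s0 = -d' * (L s0) ^ (-(j + 1) / (k - j - 1)) := by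
  set g1 : ℝ → ℝ := fun u => u ^ (j - k) / Real.sqrt ((u ^ k) ^ 2 - 1) with hg1
  set g2 : ℝ → ℝ := fun u => u ^ (j - k) * (Real.sqrt ((u ^ k) ^ 2 - 1) - u ^ k) with hg2
  set I : ℝ := ∫ u in Ioi 1, g1 u with hIdef
  set J : ℝ := ∫ u in Ioi 1, g2 u with hJdef
  -- positivity of I
  have hIpos : 0 < I := by
    rw [hIdef]
    rw [setIntegral_pos_iff_support_of_nonneg_ae ?_ (aux_integrable k j hj hk hk1)]
    · have hsub : Ioi (1:ℝ) ⊆ Function.support g1 ∩ Ioi 1 := by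
        intro u hu
        have h1u : (1:ℝ) < u := hu
        have h0u : (0:ℝ) < u := lt_trans one_pos h1u
        have huk : (1:ℝ) < u ^ k := by
          calc (1:ℝ) < u := h1u
            _ = u ^ (1:ℝ) := (Real.rpow_one u).symm
            _ ≤ u ^ k := Real.rpow_le_rpow_of_exponent_le h1u.le hk1
        refine ⟨?_, hu⟩
        have : 0 < g1 u := by
          apply div_pos (Real.rpow_pos_of_pos h0u _)
          apply Real.sqrt_pos.2
          nlinarith
        exact ne_of_gt this
      calc (0:ENNReal) < volume (Ioi (1:ℝ)) := by rw [Real.volume_Ioi]; simp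
        _ ≤ volume (Function.support g1 ∩ Ioi 1) := measure_mono hsub
    · filter_upwards [ae_restrict_mem measurableSet_Ioi] with u hu
      have h1u : (1:ℝ) < u := hu
      have h0u : (0:ℝ) < u := lt_trans one_pos h1u
      exact div_nonneg (Real.rpow_nonneg h0u.le _) (Real.sqrt_nonneg _)
  set C : ℝ := 2 * (b / a) * I with hCdef
  have hCpos : 0 < C := by
    rw [hCdef]; positivity
  set D : ℝ := 2 * b / (j + 1) - 2 * b * I - 2 * b * J with hDdef
  set e : ℝ := -(j + 1) / (k - j - 1) with hedef
  have hkj : (0:ℝ) < k - j - 1 := by linarith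
  refine ⟨D, D * C ^ (-e), fun s0 hs0 => ?_⟩
  have hs0k : 0 < s0 ^ k := Real.rpow_pos_of_pos hs0 k
  -- substitution identities
  have key1 : (∫ s in Ioi s0, (b * s ^ j / (a * s ^ k)) *
        ((a * s0 ^ k) / Real.sqrt ((a * s ^ k) ^ 2 - (a * s0 ^ k) ^ 2)))
      = (b / a) * s0 ^ (j + 1 - k) * I := by
    set F : ℝ → ℝ := fun s => (b * s ^ j / (a * s ^ k)) *
        ((a * s0 ^ k) / Real.sqrt ((a * s ^ k) ^ 2 - (a * s0 ^ k) ^ 2)) with hF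
    have hsub := integral_comp_mul_left_Ioi F 1 hs0
    rw [mul_one] at hsub
    have h1 : ∫ s in Ioi s0, F s = s0 * ∫ x in Ioi 1, F (s0 * x) := by
      rw [hsub, smul_eq_mul]; field_simp
    have h2 : ∫ x in Ioi 1, F (s0 * x) = ∫ x in Ioi 1, (b / a) * s0 ^ (j - k) * g1 x := by
      apply setIntegral_congr_fun measurableSet_Ioi
      intro x hx
      have hx1 : (1:ℝ) < x := hx
      have hx0 : (0:ℝ) < x := lt_trans one_pos hx1
      have hxk : (1:ℝ) < x ^ k := by
        calc (1:ℝ) < x := hx1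
          _ = x ^ (1:ℝ) := (Real.rpow_one x).symm
          _ ≤ x ^ k := Real.rpow_le_rpow_of_exponent_le hx1.le hk1
      have hjm : (s0 * x) ^ j = s0 ^ j * x ^ j := Real.mul_rpow hs0.le hx0.le
      have hkm : (s0 * x) ^ k = s0 ^ k * x ^ k := Real.mul_rpow hs0.le hx0.le
      have hsqrt : Real.sqrt ((a * (s0 ^ k * x ^ k)) ^ 2 - (a * s0 ^ k) ^ 2)
          = (a * s0 ^ k) * Real.sqrt ((x ^ k) ^ 2 - 1) := by
        rw [show (a * (s0 ^ k * x ^ k)) ^ 2 - (a * s0 ^ k) ^ 2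
            = (a * s0 ^ k) ^ 2 * ((x ^ k) ^ 2 - 1) by ring,
          Real.sqrt_mul (sq_nonneg _), Real.sqrt_sq (by positivity)]
      have hsq : 0 < Real.sqrt ((x ^ k) ^ 2 - 1) := Real.sqrt_pos.2 (by nlinarith)
      have hs0j : 0 < s0 ^ j := Real.rpow_pos_of_pos hs0 j
      have hxkp : 0 < x ^ k := by linarith
      simp only [hF, hg1, hjm, hkm, hsqrt]
      rw [Real.rpow_sub hs0, Real.rpow_sub hx0]
      field_simp
    rw [h1, h2, integral_const_mul]
    rw [show j + 1 - k = (j - k) + 1 by ring, Real.rpow_add hs0, Real.rpow_one]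
    ring
  have key2 : (∫ s in Ioi s0, (b * s ^ j / (a * s ^ k)) *
        (Real.sqrt ((a * s ^ k) ^ 2 - (a * s0 ^ k) ^ 2) - a * s ^ k))
      = b * s0 ^ (j + 1) * J := by
    set F : ℝ → ℝ := fun s => (b * s ^ j / (a * s ^ k)) *
        (Real.sqrt ((a * s ^ k) ^ 2 - (a * s0 ^ k) ^ 2) - a * s ^ k) with hF
    have hsub := integral_comp_mul_left_Ioi F 1 hs0
    rw [mul_one] at hsub
    have h1 : ∫ s in Ioi s0, F s = s0 * ∫ x in Ioi 1, F (s0 * x) := by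
      rw [hsub, smul_eq_mul]; field_simp
    have h2 : ∫ x in Ioi 1, F (s0 * x) = ∫ x in Ioi 1, (b * s0 ^ j) * g2 x := by
      apply setIntegral_congr_fun measurableSet_Ioi
      intro x hx
      have hx1 : (1:ℝ) < x := hx
      have hx0 : (0:ℝ) < x := lt_trans one_pos hx1
      have hxk : (1:ℝ) < x ^ k := by
        calc (1:ℝ) < x := hx1
          _ = x ^ (1:ℝ) := (Real.rpow_one x).symm
          _ ≤ x ^ k := Real.rpow_le_rpow_of_exponent_le hx1.le hk1
      have hjm : (s0 * x) ^ j = s0 ^ j * x ^ j := Real.mul_rpow hs0.le hx0.le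
      have hkm : (s0 * x) ^ k = s0 ^ k * x ^ k := Real.mul_rpow hs0.le hx0.le
      have hsqrt : Real.sqrt ((a * (s0 ^ k * x ^ k)) ^ 2 - (a * s0 ^ k) ^ 2)
          = (a * s0 ^ k) * Real.sqrt ((x ^ k) ^ 2 - 1) := by
        rw [show (a * (s0 ^ k * x ^ k)) ^ 2 - (a * s0 ^ k) ^ 2
            = (a * s0 ^ k) ^ 2 * ((x ^ k) ^ 2 - 1) by ring,
          Real.sqrt_mul (sq_nonneg _), Real.sqrt_sq (by positivity)]
      have hs0j : 0 < s0 ^ j := Real.rpow_pos_of_pos hs0 j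
      have hxkp : 0 < x ^ k := by linarith
      simp only [hF, hg2, hjm, hkm, hsqrt]
      rw [Real.rpow_sub hx0]
      field_simp
    rw [h1, h2, integral_const_mul]
    rw [show j + 1 = j + 1 by ring, Real.rpow_add hs0, Real.rpow_one]
    ring
  have key3 : (∫ s in Ioc 0 s0, b * s ^ j) = b * (s0 ^ (j + 1) / (j + 1)) := by
    rw [← intervalIntegral.integral_of_le hs0.le, intervalIntegral.integral_const_mul,
      integral_rpow (Or.inl (by linarith)), Real.zero_rpow (ne_of_gt hj)]
    ring
  have hLs : L s0 = C * s0 ^ (j + 1 - k) := by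
    rw [hL s0 hs0, key1, hCdef]; ring
  have hpow : s0 ^ k * s0 ^ (j + 1 - k) = s0 ^ (j + 1) := by
    rw [← Real.rpow_add hs0, show k + (j + 1 - k) = j + 1 by ring]
  have h2 : a * s0 ^ k * (C * s0 ^ (j + 1 - k)) = 2 * b * I * s0 ^ (j + 1) := by
    rw [hCdef, ← hpow]
    field_simp
  have hEs : E s0 = -D * s0 ^ (j + 1) := by
    rw [hE s0 hs0, hLs, key2, key3, h2, hDdef]
    have hj1 : j + 1 ≠ 0 := ne_of_gt hj
    field_simp
    ring
  refine ⟨hEs, ?_⟩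
  have hCe : (0:ℝ) < C ^ e := Real.rpow_pos_of_pos hCpos e
  have hne : k - j - 1 ≠ 0 := ne_of_gt hkj
  have hexp : (j + 1 - k) * e = j + 1 := by
    rw [hedef]
    field_simp
    ring
  have hrp : (C * s0 ^ (j + 1 - k)) ^ e = C ^ e * s0 ^ (j + 1) := by
    rw [Real.mul_rpow hCpos.le (Real.rpow_nonneg hs0.le _), ← Real.rpow_mul hs0.le, hexp]
  rw [hEs, hLs, hrp, Real.rpow_neg hCpos.le]
  field_simp
end
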